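/- For every Hermitian N×N matrix J, the function Φ ↦ exp(−S[Φ] + V tr(JΦ)), viewed as a function of the N² real coordinates (Φ_ii for 1 ≤ i ≤ N and Re Φ_ij, Im Φ_ij for i < j) of the Hermitian matrix Φ, is Lebesgue integrable on ℝ^{N²}; in particular the partition function Z[J] is a well-defined finite real number. -/

import Mathlib

open MeasureTheory Matrix Polynomial BigOperators

/-- Index set for the strictly-upper-triangular entries. -/
abbrev OffIdx (N : ℕ) := {p : Fin N × Fin N // p.1 < p.2}

/-- Real coordinates of a Hermitian matrix: the diagonal entries and the
(complex) strictly-upper-triangular entries. -/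
abbrev HCoords (N : ℕ) := (Fin N → ℝ) × (OffIdx N → ℂ)

/-- The Hermitian matrix with the given coordinates. -/
noncomputable def hermOf {N : ℕ} (c : HCoords N) : Matrix (Fin N) (Fin N) ℂ :=
  Matrix.of fun i j =>
    if h : i < j then c.2 ⟨(i, j), h⟩
    else if h' : j < i then star (c.2 ⟨(j, i), h'⟩)
    else (c.1 i : ℂ)

/-- The diagonal matrix `M = diag (√E_0, …, √E_{N-1})`. -/
noncomputable def Mmat (N : ℕ) (Ev : Fin N → ℝ) : Matrix (Fin N) (Fin N) ℂ :=
  Matrix.diagonal fun i => (Real.sqrt (Ev i) : ℂ)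

/-- The diagonal matrix `E = diag (E_0, …, E_{N-1})`. -/
noncomputable def Emat (N : ℕ) (Ev : Fin N → ℝ) : Matrix (Fin N) (Fin N) ℂ :=
  Matrix.diagonal fun i => (Ev i : ℂ)

/-- The action `S[Φ] = V tr (EΦ² + κΦ + ½MΦMΦ + √λ MΦ³ + (λ/4)Φ⁴)`. -/
noncomputable def action (N : ℕ) (Vc lam kap : ℝ) (Ev : Fin N → ℝ)
    (Φ : Matrix (Fin N) (Fin N) ℂ) : ℝ :=
  Vc * (Matrix.trace (Emat N Ev * Φ ^ 2 + (kap : ℂ) • Φ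
      + (1 / 2 : ℂ) • (Mmat N Ev * Φ * Mmat N Ev * Φ)
      + ((Real.sqrt lam : ℝ) : ℂ) • (Mmat N Ev * Φ ^ 3)
      + ((lam : ℂ) / 4) • Φ ^ 4)).re

/-- The partition function `Z[J] = ∫ DΦ exp (−S[Φ] + V tr (JΦ))`. -/
noncomputable def Zfun (N : ℕ) (Vc lam kap : ℝ) (Ev : Fin N → ℝ)
    (J : Matrix (Fin N) (Fin N) ℂ) : ℝ :=
  ∫ c : HCoords N,
    Real.exp (- action N Vc lam kap Ev (hermOf c)
      + Vc * (Matrix.trace (J * hermOf c)).re)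

/-- `P(z) = ∫ℝ exp(−(λV/4)x⁴ + Vxz) dx`. -/
noncomputable def Pint (Vc lam : ℝ) (z : ℝ) : ℝ :=
  ∫ x : ℝ, Real.exp (- (lam * Vc / 4) * x ^ 4 + Vc * x * z)

/-- `P_N(s₁,…,s_N) = det (P^{(i−1)}(s_j))`. -/
noncomputable def PNdet (N : ℕ) (Vc lam : ℝ) (s : Fin N → ℝ) : ℝ :=
  Matrix.det (Matrix.of fun i j : Fin N => iteratedDeriv (i : ℕ) (Pint Vc lam) (s j))

lemma amgm3 {x y z : ℝ} (hx : 0 ≤ x) (hy : 0 ≤ y) (hz : 0 ≤ z) :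
    x * y * z ≤ (x^3 + y^3 + z^3) / 3 := by
  nlinarith [sq_nonneg (x - y), sq_nonneg (y - z), sq_nonneg (x - z),
    mul_nonneg (mul_nonneg hx hy) hz, mul_nonneg (add_nonneg hx hy) (sq_nonneg (x - y)),
    mul_nonneg (add_nonneg hy hz) (sq_nonneg (y - z)),
    mul_nonneg (add_nonneg hx hz) (sq_nonneg (x - z)),
    mul_nonneg hz (sq_nonneg (x - y)), mul_nonneg hx (sq_nonneg (y - z)),
    mul_nonneg hy (sq_nonneg (x - z))]

lemma onevar (L B D : ℝ) (hL : 0 < L) (hB : 0 ≤ B) (hD : 0 ≤ D) :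
    ∃ C : ℝ, 0 ≤ C ∧ ∀ a : ℝ, 0 ≤ a → -L*a^4 + B*a^3 + D*a ≤ C - (L/2)*a^4 := by
  obtain ⟨T, hT1, hBT, hDT⟩ : ∃ T : ℝ, 1 ≤ T ∧ 4*B/L ≤ T ∧ 4*D/L ≤ T := by
    refine ⟨1 + 4*B/L + 4*D/L, ?_, ?_, ?_⟩ <;>
      [skip; skip; skip] <;>
      · have h1 : 0 ≤ 4*B/L := by positivity
        have h2 : 0 ≤ 4*D/L := by positivity
        linarith
  have hT0 : 0 ≤ T := by linarith
  refine ⟨B*T^3 + D*T, by positivity, fun a ha => ?_⟩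
  rcases le_total a T with h | h
  · have h3 : B*a^3 ≤ B*T^3 := mul_le_mul_of_nonneg_left (pow_le_pow_left₀ ha h 3) hB
    have h1 : D*a ≤ D*T := mul_le_mul_of_nonneg_left h hD
    linarith [mul_nonneg hL.le (pow_nonneg ha 4)]
  · have ha1 : 1 ≤ a := le_trans hT1 h
    have hBa : 4*B ≤ a*L := (div_le_iff₀ hL).1 (le_trans hBT h)
    have hDa : 4*D ≤ a*L := (div_le_iff₀ hL).1 (le_trans hDT h)
    have hC : 0 ≤ B*T^3 + D*T := by positivity
    have k1 : 4*B*a^3 ≤ a*L*a^3 := mul_le_mul_of_nonneg_right hBa (pow_nonneg ha 3)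
    have k2 : 4*D*a ≤ a*L*a := mul_le_mul_of_nonneg_right hDa ha
    have k3 : a^2 ≤ a^4 := pow_le_pow_right₀ ha1 (by norm_num)
    have k4 : L * a^2 ≤ L * a^4 := mul_le_mul_of_nonneg_left k3 hL.le
    nlinarith [k1, k2, k4, hC]


lemma hermOf_diag {N : ℕ} (c : HCoords N) (i : Fin N) : hermOf c i i = (c.1 i : ℂ) := by
  simp [hermOf]

lemma hermOf_conj {N : ℕ} (c : HCoords N) (i j : Fin N) :
    hermOf c j i = (starRingEnd ℂ) (hermOf c i j) := by
  rcases lt_trichotomy i j with h | h | h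
  · simp [hermOf, h, asymm h, Complex.star_def]
  · subst h; simp [hermOf, Complex.conj_ofReal]
  · simp [hermOf, h, asymm h, Complex.star_def]

section core
variable {N : ℕ} (c : HCoords N)

local notation "Φ" => hermOf c
noncomputable def Aab {N : ℕ} (c : HCoords N) (i j : Fin N) : ℝ := ‖hermOf c i j‖

lemma Aab_nonneg (i j : Fin N) : 0 ≤ Aab c i j := norm_nonneg _

lemma Aab_symm (i j : Fin N) : Aab c j i = Aab c i j := by
  rw [Aab, Aab, hermOf_conj, Complex.norm_conj]

lemma mul_conj_self (i j : Fin N) : Φ i j * Φ j i = ((Aab c i j ^ 2 : ℝ) : ℂ) := by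
  rw [hermOf_conj c i j, Complex.mul_conj]
  simp [Aab, Complex.sq_norm]

lemma sq_diag (i : Fin N) : (Φ ^ 2) i i = ((∑ j, Aab c i j ^ 2 : ℝ) : ℂ) := by
  rw [pow_two, Matrix.mul_apply, Complex.ofReal_sum]
  exact Finset.sum_congr rfl fun j _ => mul_conj_self c i j

lemma sq_conj (i j : Fin N) : (Φ ^ 2) j i = (starRingEnd ℂ) ((Φ ^ 2) i j) := by
  rw [pow_two, Matrix.mul_apply, Matrix.mul_apply, map_sum]
  exact Finset.sum_congr rfl fun k _ => by
    rw [_root_.map_mul, ← hermOf_conj, ← hermOf_conj, mul_comm]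

lemma traceE_re (Ev : Fin N → ℝ) :
    (Matrix.trace (Emat N Ev * Φ ^ 2)).re = ∑ i, Ev i * ∑ j, Aab c i j ^ 2 := by
  rw [Matrix.trace]
  rw [Complex.re_sum]
  refine Finset.sum_congr rfl fun i _ => ?_
  rw [Matrix.diag_apply, Emat, Matrix.diagonal_mul, sq_diag]
  rw [← Complex.ofReal_mul, Complex.ofReal_re]

lemma traceM_re (Ev : Fin N → ℝ) :
    (Matrix.trace (Mmat N Ev * Φ * Mmat N Ev * Φ)).re
      = ∑ i, ∑ j, Real.sqrt (Ev i) * Real.sqrt (Ev j) * Aab c i j ^ 2 := by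
  rw [Matrix.trace, Complex.re_sum]
  refine Finset.sum_congr rfl fun i _ => ?_
  rw [Matrix.diag_apply, Matrix.mul_apply, Complex.re_sum]
  refine Finset.sum_congr rfl fun j _ => ?_
  rw [Mmat, Matrix.mul_diagonal, Matrix.diagonal_mul]
  have : (Real.sqrt (Ev i) : ℂ) * Φ i j * (Real.sqrt (Ev j) : ℂ) * Φ j i
      = ((Real.sqrt (Ev i) * Real.sqrt (Ev j) * Aab c i j ^ 2 : ℝ) : ℂ) := by
    rw [show (Real.sqrt (Ev i) : ℂ) * Φ i j * (Real.sqrt (Ev j) : ℂ) * Φ j i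
        = (Real.sqrt (Ev i) : ℂ) * (Real.sqrt (Ev j) : ℂ) * (Φ i j * Φ j i) by ring,
      mul_conj_self]
    push_cast; ring
  rw [this, Complex.ofReal_re]

lemma trace4_re :
    (Matrix.trace (Φ ^ 4)).re = ∑ i, ∑ j, ‖(Φ ^ 2) i j‖ ^ 2 := by
  rw [show (Φ ^ 4) = Φ ^ 2 * Φ ^ 2 from pow_add (hermOf c) 2 2, Matrix.trace, Complex.re_sum]
  refine Finset.sum_congr rfl fun i _ => ?_
  rw [Matrix.diag_apply, Matrix.mul_apply, Complex.re_sum]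
  refine Finset.sum_congr rfl fun j _ => ?_
  rw [sq_conj c i j, Complex.mul_conj, Complex.ofReal_re]
  exact (Complex.sq_norm _).symm

lemma trace4_lower :
    ∑ i, ∑ j, Aab c i j ^ 4 ≤ (Matrix.trace (Φ ^ 4)).re := by
  rw [trace4_re]
  refine Finset.sum_le_sum fun i _ => ?_
  calc ∑ j, Aab c i j ^ 4 = ∑ j, (Aab c i j ^ 2) ^ 2 := by
        refine Finset.sum_congr rfl fun j _ => by ring
    _ ≤ (∑ j, Aab c i j ^ 2) ^ 2 :=
        Finset.sum_sq_le_sq_sum_of_nonneg fun j _ => sq_nonneg _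
    _ = ‖(Φ ^ 2) i i‖ ^ 2 := by
        rw [sq_diag, Complex.norm_real, Real.norm_eq_abs, sq_abs]
    _ ≤ ∑ j, ‖(Φ ^ 2) i j‖ ^ 2 :=
        Finset.single_le_sum (f := fun j => ‖(Φ ^ 2) i j‖ ^ 2)
          (fun j _ => sq_nonneg _) (Finset.mem_univ i)

lemma trace1 : Matrix.trace Φ = ((∑ i, c.1 i : ℝ) : ℂ) := by
  rw [Matrix.trace]
  push_cast
  exact Finset.sum_congr rfl fun i _ => hermOf_diag c i

lemma cube_diag_bound (i : Fin N) :
    ‖(Φ ^ 3) i i‖ ≤ ∑ j, ∑ k, Aab c i k * Aab c k j * Aab c j i := by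
  rw [pow_succ, Matrix.mul_apply]
  refine le_trans (norm_sum_le _ _) (Finset.sum_le_sum fun j _ => ?_)
  rw [norm_mul]
  have h2 : ‖(Φ ^ 2) i j‖ ≤ ∑ k, Aab c i k * Aab c k j := by
    rw [pow_two, Matrix.mul_apply]
    refine le_trans (norm_sum_le _ _) (Finset.sum_le_sum fun k _ => ?_)
    rw [norm_mul]
    simp [Aab]
  calc ‖(Φ ^ 2) i j‖ * ‖Φ j i‖
      ≤ (∑ k, Aab c i k * Aab c k j) * Aab c j i :=
        mul_le_mul_of_nonneg_right h2 (Aab_nonneg c j i)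
    _ = ∑ k, Aab c i k * Aab c k j * Aab c j i := by rw [Finset.sum_mul]

lemma traceM3_bound (Ev : Fin N → ℝ) :
    |(Matrix.trace (Mmat N Ev * Φ ^ 3)).re|
      ≤ (∑ i, Real.sqrt (Ev i)) * ∑ i, ∑ j, ∑ k, Aab c i k * Aab c k j * Aab c j i := by
  have htri_nn : ∀ i : Fin N, 0 ≤ ∑ j, ∑ k, Aab c i k * Aab c k j * Aab c j i :=
    fun i => Finset.sum_nonneg fun j _ => Finset.sum_nonneg fun k _ =>
      mul_nonneg (mul_nonneg (Aab_nonneg _ _ _) (Aab_nonneg _ _ _)) (Aab_nonneg _ _ _)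
  rw [Matrix.trace, Complex.re_sum, Finset.sum_mul]
  refine le_trans (Finset.abs_sum_le_sum_abs _ _) (Finset.sum_le_sum fun i _ => ?_)
  rw [Matrix.diag_apply, Mmat, Matrix.diagonal_mul, Complex.re_ofReal_mul, abs_mul,
    abs_of_nonneg (Real.sqrt_nonneg _)]
  refine mul_le_mul_of_nonneg_left ?_ (Real.sqrt_nonneg _)
  refine le_trans (le_trans (Complex.abs_re_le_norm _) (cube_diag_bound c i)) ?_
  exact Finset.single_le_sum
    (f := fun i => ∑ j, ∑ k, Aab c i k * Aab c k j * Aab c j i)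
    (fun i _ => htri_nn i) (Finset.mem_univ i)

lemma triple_le :
    ∑ i, ∑ j, ∑ k, Aab c i k * Aab c k j * Aab c j i
      ≤ (N : ℝ) * ∑ i, ∑ j, Aab c i j ^ 3 := by
  have h2 : ∑ i, ∑ j, ∑ k, 3 * (Aab c i k * Aab c k j * Aab c j i)
      ≤ ∑ i, ∑ j, ∑ k, (Aab c i k ^ 3 + Aab c k j ^ 3 + Aab c j i ^ 3) := by
    refine Finset.sum_le_sum fun i _ => Finset.sum_le_sum fun j _ =>
      Finset.sum_le_sum fun k _ => ?_
    have := amgm3 (Aab_nonneg c i k) (Aab_nonneg c k j) (Aab_nonneg c j i)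
    linarith
  have e1 : ∑ i, ∑ j, ∑ k, 3 * (Aab c i k * Aab c k j * Aab c j i)
      = 3 * ∑ i, ∑ j, ∑ k, Aab c i k * Aab c k j * Aab c j i := by
    simp [Finset.mul_sum]
  have hTa : ∑ i : Fin N, ∑ j : Fin N, ∑ k : Fin N, Aab c i k ^ 3
      = (N : ℝ) * ∑ i, ∑ j, Aab c i j ^ 3 := by
    simp [Finset.sum_const, Finset.card_univ, Finset.mul_sum]
  have hTb : ∑ i : Fin N, ∑ j : Fin N, ∑ k : Fin N, Aab c k j ^ 3
      = (N : ℝ) * ∑ i, ∑ j, Aab c i j ^ 3 := by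
    rw [Finset.sum_const, Finset.card_univ, Fintype.card_fin, nsmul_eq_mul]
    congr 1
    rw [Finset.sum_comm]
  have hTc : ∑ i : Fin N, ∑ j : Fin N, ∑ k : Fin N, Aab c j i ^ 3
      = (N : ℝ) * ∑ i, ∑ j, Aab c i j ^ 3 := by
    simp only [Finset.sum_const, Finset.card_univ, Fintype.card_fin, nsmul_eq_mul,
      ← Finset.mul_sum]
    congr 1
    exact Finset.sum_comm
  have e2 : ∑ i, ∑ j, ∑ k, (Aab c i k ^ 3 + Aab c k j ^ 3 + Aab c j i ^ 3)
      = 3 * ((N : ℝ) * ∑ i, ∑ j, Aab c i j ^ 3) := by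
    simp only [Finset.sum_add_distrib]
    rw [hTa, hTb, hTc]; ring
  linarith

lemma traceJ_bound (J : Matrix (Fin N) (Fin N) ℂ) :
    (Matrix.trace (J * Φ)).re ≤ (∑ i, ∑ j, ‖J i j‖) * ∑ i, ∑ j, Aab c i j := by
  set SJ := ∑ i, ∑ j, ‖J i j‖ with hSJ
  have hJle : ∀ i j, ‖J i j‖ ≤ SJ := by
    intro i j
    refine le_trans (Finset.single_le_sum (f := fun j => ‖J i j‖)
      (fun _ _ => norm_nonneg _) (Finset.mem_univ j)) ?_
    exact Finset.single_le_sum (f := fun i => ∑ j, ‖J i j‖)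
      (fun _ _ => Finset.sum_nonneg fun _ _ => norm_nonneg _) (Finset.mem_univ i)
  calc (Matrix.trace (J * Φ)).re ≤ ‖Matrix.trace (J * Φ)‖ := Complex.re_le_norm _
    _ ≤ ∑ i, ‖(J * Φ) i i‖ := by
        rw [Matrix.trace]; exact norm_sum_le _ _
    _ ≤ ∑ i, ∑ j, ‖J i j‖ * Aab c j i := by
        refine Finset.sum_le_sum fun i _ => ?_
        rw [Matrix.mul_apply]
        refine le_trans (norm_sum_le _ _) (Finset.sum_le_sum fun j _ => ?_)
        rw [norm_mul]
        simp [Aab]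
    _ ≤ ∑ i, ∑ j, SJ * Aab c j i := by
        refine Finset.sum_le_sum fun i _ => Finset.sum_le_sum fun j _ => ?_
        exact mul_le_mul_of_nonneg_right (hJle i j) (Aab_nonneg c j i)
    _ = SJ * ∑ i, ∑ j, Aab c i j := by
        rw [← Finset.sum_comm]
        simp [Finset.mul_sum]

end core

section core2
variable {N : ℕ} (c : HCoords N)
local notation "Φ" => hermOf c

lemma Aab_diag (i : Fin N) : Aab c i i = |c.1 i| := by
  rw [Aab, hermOf_diag, Complex.norm_real, Real.norm_eq_abs]

lemma diag_le : ∑ i, |c.1 i| ≤ ∑ i, ∑ j, Aab c i j := by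
  refine Finset.sum_le_sum fun i _ => ?_
  rw [← Aab_diag]
  exact Finset.single_le_sum (f := fun j => Aab c i j) (fun j _ => Aab_nonneg c i j)
    (Finset.mem_univ i)

lemma coords_le :
    (∑ i, (c.1 i)^4) + ∑ p : OffIdx N, ‖c.2 p‖^4 ≤ ∑ i, ∑ j, Aab c i j ^ 4 := by
  classical
  have habs4 : ∀ x : ℝ, |x| ^ 4 = x ^ 4 := fun x => by
    rw [← abs_pow]; exact abs_of_nonneg (by positivity)
  set f : Fin N × Fin N → ℝ := fun p => Aab c p.1 p.2 ^ 4 with hf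
  have hnn : ∀ p : Fin N × Fin N, 0 ≤ f p := fun p => by positivity
  set sd : Finset (Fin N × Fin N) :=
    Finset.univ.map ⟨fun i => (i, i), fun a b h => (Prod.mk.injEq _ _ _ _ ▸ h).1⟩ with hsd
  set so : Finset (Fin N × Fin N) :=
    Finset.univ.map ⟨Subtype.val (p := fun p : Fin N × Fin N => p.1 < p.2),
      Subtype.val_injective⟩ with hso
  have hdisj : Disjoint sd so := by
    rw [Finset.disjoint_left]
    rintro p hp hq
    rw [hsd, Finset.mem_map] at hp
    obtain ⟨i, _, rfl⟩ := hp
    rw [hso, Finset.mem_map] at hq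
    obtain ⟨q, _, hq⟩ := hq
    simp only [Function.Embedding.coeFn_mk] at hq
    have := q.2
    rw [hq] at this
    exact absurd this (lt_irrefl i)
  have hsum1 : ∑ p ∈ sd, f p = ∑ i, (c.1 i)^4 := by
    rw [hsd, Finset.sum_map]
    exact Finset.sum_congr rfl fun i _ => by
      simp only [Function.Embedding.coeFn_mk, hf, Aab_diag, habs4]
      exact (congrArg (· ^ 4) (Aab_diag c i)).trans (habs4 _)
  have hsum2 : ∑ p ∈ so, f p = ∑ p : OffIdx N, ‖c.2 p‖^4 := by
    rw [hso, Finset.sum_map]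
    refine Finset.sum_congr rfl fun p _ => ?_
    simp only [Function.Embedding.coeFn_mk, hf, Aab]
    have : hermOf c p.1.1 p.1.2 = c.2 p := by
      have h := p.2
      simp only [hermOf, Matrix.of_apply, dif_pos h]
    rw [this]
  calc (∑ i, (c.1 i)^4) + ∑ p : OffIdx N, ‖c.2 p‖^4
      = ∑ p ∈ sd ∪ so, f p := by rw [Finset.sum_union hdisj, hsum1, hsum2]
    _ ≤ ∑ p ∈ Finset.univ, f p :=
        Finset.sum_le_sum_of_subset_of_nonneg (Finset.subset_univ _) fun p _ _ => hnn p
    _ = ∑ i, ∑ j, Aab c i j ^ 4 := by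
        rw [← Finset.univ_product_univ, Finset.sum_product]

lemma action_eq (Vc lam kap : ℝ) (Ev : Fin N → ℝ) :
    action N Vc lam kap Ev Φ = Vc * (
      (Matrix.trace (Emat N Ev * Φ ^ 2)).re
      + kap * ∑ i, c.1 i
      + (1/2) * (Matrix.trace (Mmat N Ev * Φ * Mmat N Ev * Φ)).re
      + Real.sqrt lam * (Matrix.trace (Mmat N Ev * Φ ^ 3)).re
      + (lam/4) * (Matrix.trace (Φ ^ 4)).re) := by
  rw [action]
  congr 1
  have h2 : ((1:ℂ)/2) = ((1/2 : ℝ) : ℂ) := by norm_num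
  have h4 : ((lam:ℂ)/4) = ((lam/4 : ℝ) : ℂ) := by push_cast; ring
  rw [Matrix.trace_add, Matrix.trace_add, Matrix.trace_add, Matrix.trace_add,
    Matrix.trace_smul, Matrix.trace_smul, Matrix.trace_smul, Matrix.trace_smul,
    h2, h4]
  simp only [smul_eq_mul, Complex.add_re, Complex.re_ofReal_mul]
  rw [trace1, Complex.ofReal_re]
end core2

set_option maxHeartbeats 2000000 in
lemma exponent_le (N : ℕ) (Vc lam kap : ℝ) (hV : 0 < Vc) (hlam : 0 < lam)
    (Ev : Fin N → ℝ) (hE : ∀ i, 0 < Ev i) (J : Matrix (Fin N) (Fin N) ℂ) :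
    ∃ C α : ℝ, 0 < α ∧ ∀ c : HCoords N,
      -action N Vc lam kap Ev (hermOf c) + Vc * (Matrix.trace (J * hermOf c)).re
        ≤ C - α * ((∑ i, (c.1 i)^4) + ∑ p : OffIdx N, ‖c.2 p‖^4) := by
  have hm0 : 0 ≤ ∑ i, Real.sqrt (Ev i) := Finset.sum_nonneg fun i _ => Real.sqrt_nonneg _
  have hSJ0 : 0 ≤ ∑ i, ∑ j, ‖J i j‖ :=
    Finset.sum_nonneg fun i _ => Finset.sum_nonneg fun j _ => norm_nonneg _
  have hLpos : 0 < Vc * (lam/4) := by positivity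
  have hBnn : 0 ≤ Vc * (Real.sqrt lam * ((∑ i, Real.sqrt (Ev i)) * N)) := by positivity
  have hDnn : 0 ≤ Vc * (|kap| + ∑ i, ∑ j, ‖J i j‖) := by positivity
  obtain ⟨C0, hC0nn, hone⟩ := onevar _ _ _ hLpos hBnn hDnn
  refine ⟨(N:ℝ)^2 * C0, Vc * (lam/4) / 2, by positivity, fun c => ?_⟩
  set Q1 := ∑ i, ∑ j, Aab c i j with hQ1
  set Q3 := ∑ i, ∑ j, Aab c i j ^ 3 with hQ3
  set Q4 := ∑ i, ∑ j, Aab c i j ^ 4 with hQ4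
  have e1 : 0 ≤ (Matrix.trace (Emat N Ev * hermOf c ^ 2)).re := by
    rw [traceE_re]
    exact Finset.sum_nonneg fun i _ => mul_nonneg (hE i).le
      (Finset.sum_nonneg fun j _ => sq_nonneg _)
  have e3 : 0 ≤ (Matrix.trace (Mmat N Ev * hermOf c * Mmat N Ev * hermOf c)).re := by
    rw [traceM_re]
    exact Finset.sum_nonneg fun i _ => Finset.sum_nonneg fun j _ =>
      mul_nonneg (mul_nonneg (Real.sqrt_nonneg _) (Real.sqrt_nonneg _)) (sq_nonneg _)
  have e5 : Q4 ≤ (Matrix.trace ((hermOf c) ^ 4)).re := trace4_lower c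
  have e2 : |kap * ∑ i, c.1 i| ≤ |kap| * Q1 := by
    rw [abs_mul]
    exact mul_le_mul_of_nonneg_left
      ((Finset.abs_sum_le_sum_abs _ _).trans (diag_le c)) (abs_nonneg kap)
  have e4 : |(Matrix.trace (Mmat N Ev * (hermOf c) ^ 3)).re|
      ≤ (∑ i, Real.sqrt (Ev i)) * ((N:ℝ) * Q3) :=
    (traceM3_bound c Ev).trans (mul_le_mul_of_nonneg_left (triple_le c) hm0)
  have e6 : (Matrix.trace (J * hermOf c)).re ≤ (∑ i, ∑ j, ‖J i j‖) * Q1 :=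
    traceJ_bound c J
  have hQ1nn : 0 ≤ Q1 :=
    Finset.sum_nonneg fun i _ => Finset.sum_nonneg fun j _ => Aab_nonneg c i j
  -- step 1 : bound by -L Q4 + B Q3 + D Q1
  have h1 : -action N Vc lam kap Ev (hermOf c) + Vc * (Matrix.trace (J * hermOf c)).re
      ≤ -(Vc * (lam/4)) * Q4
        + (Vc * (Real.sqrt lam * ((∑ i, Real.sqrt (Ev i)) * N))) * Q3
        + (Vc * (|kap| + ∑ i, ∑ j, ‖J i j‖)) * Q1 := by
    rw [action_eq]
    have t2 : -(kap * ∑ i, c.1 i) ≤ |kap| * Q1 := (neg_le_abs _).trans e2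
    have t4 : -(Matrix.trace (Mmat N Ev * (hermOf c) ^ 3)).re
        ≤ (∑ i, Real.sqrt (Ev i)) * ((N:ℝ) * Q3) := (neg_le_abs _).trans e4
    have m2 : Vc * -(kap * ∑ i, c.1 i) ≤ Vc * (|kap| * Q1) :=
      mul_le_mul_of_nonneg_left t2 hV.le
    have m4 : (Vc * Real.sqrt lam) * -(Matrix.trace (Mmat N Ev * (hermOf c) ^ 3)).re
        ≤ (Vc * Real.sqrt lam) * ((∑ i, Real.sqrt (Ev i)) * ((N:ℝ) * Q3)) :=
      mul_le_mul_of_nonneg_left t4 (by positivity)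
    have m5 : (Vc * (lam/4)) * Q4 ≤ (Vc * (lam/4)) * (Matrix.trace ((hermOf c) ^ 4)).re :=
      mul_le_mul_of_nonneg_left e5 hLpos.le
    have m6 : Vc * (Matrix.trace (J * hermOf c)).re
        ≤ Vc * ((∑ i, ∑ j, ‖J i j‖) * Q1) :=
      mul_le_mul_of_nonneg_left e6 hV.le
    have m1 : 0 ≤ Vc * (Matrix.trace (Emat N Ev * hermOf c ^ 2)).re :=
      mul_nonneg hV.le e1
    have m3 : 0 ≤ Vc * (Matrix.trace (Mmat N Ev * hermOf c * Mmat N Ev * hermOf c)).re :=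
      mul_nonneg hV.le e3
    nlinarith [m1, m2, m3, m4, m5, m6]
  -- step 2 : pointwise one-variable bound, summed
  have h2 : -(Vc * (lam/4)) * Q4
        + (Vc * (Real.sqrt lam * ((∑ i, Real.sqrt (Ev i)) * N))) * Q3
        + (Vc * (|kap| + ∑ i, ∑ j, ‖J i j‖)) * Q1
      ≤ (N:ℝ)^2 * C0 - (Vc * (lam/4) / 2) * Q4 := by
    have hsum : ∑ i, ∑ j, (-(Vc * (lam/4)) * Aab c i j ^ 4
          + (Vc * (Real.sqrt lam * ((∑ i, Real.sqrt (Ev i)) * N))) * Aab c i j ^ 3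
          + (Vc * (|kap| + ∑ i, ∑ j, ‖J i j‖)) * Aab c i j)
        ≤ ∑ i, ∑ j, (C0 - (Vc * (lam/4) / 2) * Aab c i j ^ 4) := by
      refine Finset.sum_le_sum fun i _ => Finset.sum_le_sum fun j _ => ?_
      have := hone (Aab c i j) (Aab_nonneg c i j)
      linarith
    have hlhs : ∑ i, ∑ j, (-(Vc * (lam/4)) * Aab c i j ^ 4
          + (Vc * (Real.sqrt lam * ((∑ i, Real.sqrt (Ev i)) * N))) * Aab c i j ^ 3
          + (Vc * (|kap| + ∑ i, ∑ j, ‖J i j‖)) * Aab c i j)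
        = -(Vc * (lam/4)) * Q4
          + (Vc * (Real.sqrt lam * ((∑ i, Real.sqrt (Ev i)) * N))) * Q3
          + (Vc * (|kap| + ∑ i, ∑ j, ‖J i j‖)) * Q1 := by
      simp only [Finset.sum_add_distrib, ← Finset.mul_sum]
      rfl
    have hrhs : ∑ i : Fin N, ∑ j : Fin N, (C0 - (Vc * (lam/4) / 2) * Aab c i j ^ 4)
        = (N:ℝ)^2 * C0 - (Vc * (lam/4) / 2) * Q4 := by
      simp only [Finset.sum_sub_distrib, ← Finset.mul_sum, Finset.sum_const,
        Finset.card_univ, Fintype.card_fin, nsmul_eq_mul]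
      ring
    linarith [hsum, hlhs.symm.le, hrhs.le]
  -- step 3 : coords
  have h3 : (∑ i, (c.1 i)^4) + ∑ p : OffIdx N, ‖c.2 p‖^4 ≤ Q4 := coords_le c
  have h4 : (Vc * (lam/4) / 2) * ((∑ i, (c.1 i)^4) + ∑ p : OffIdx N, ‖c.2 p‖^4)
      ≤ (Vc * (lam/4) / 2) * Q4 := mul_le_mul_of_nonneg_left h3 (by positivity)
  linarith

lemma hermOf_continuous {N : ℕ} : Continuous (fun c : HCoords N => hermOf c) := by
  apply continuous_matrix
  intro i j
  simp only [hermOf, Matrix.of_apply]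
  by_cases h : i < j
  · simp only [dif_pos h]
    exact (continuous_apply _).comp continuous_snd
  · by_cases h' : j < i
    · simp only [dif_neg h, dif_pos h']
      exact continuous_star.comp ((continuous_apply _).comp continuous_snd)
    · simp only [dif_neg h, dif_neg h']
      exact Complex.continuous_ofReal.comp ((continuous_apply _).comp continuous_fst)

lemma integrand_continuous (N : ℕ) (Vc lam kap : ℝ) (Ev : Fin N → ℝ)
    (J : Matrix (Fin N) (Fin N) ℂ) :
    Continuous (fun c : HCoords N =>
      Real.exp (- action N Vc lam kap Ev (hermOf c)
        + Vc * (Matrix.trace (J * hermOf c)).re)) := by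
  have hΦ : Continuous (fun c : HCoords N => hermOf c) := hermOf_continuous
  have h2 : Continuous (fun c : HCoords N => (hermOf c) ^ 2) := hΦ.pow 2
  have h3 : Continuous (fun c : HCoords N => (hermOf c) ^ 3) := hΦ.pow 3
  have h4 : Continuous (fun c : HCoords N => (hermOf c) ^ 4) := hΦ.pow 4
  apply Continuous.rexp
  apply Continuous.add
  · apply Continuous.neg
    unfold action
    apply Continuous.mul continuous_const
    apply Complex.continuous_re.comp
    apply Continuous.matrix_trace
    refine Continuous.add (Continuous.add (Continuous.add (Continuous.add ?_ ?_) ?_) ?_) ?_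
    · exact Continuous.matrix_mul continuous_const h2
    · exact Continuous.fun_const_smul hΦ _
    · exact Continuous.fun_const_smul
        ((Continuous.matrix_mul (Continuous.matrix_mul
          (Continuous.matrix_mul continuous_const hΦ) continuous_const) hΦ)) _
    · exact Continuous.fun_const_smul (Continuous.matrix_mul continuous_const h3) _
    · exact Continuous.fun_const_smul h4 _
  · apply Continuous.mul continuous_const
    exact Complex.continuous_re.comp
      (Continuous.matrix_trace (Continuous.matrix_mul continuous_const hΦ))

lemma intR (α : ℝ) (hα : 0 < α) : Integrable (fun x : ℝ => Real.exp (-α * x^4)) := by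
  apply Integrable.mono' ((integrable_exp_neg_mul_sq hα).const_mul (Real.exp α))
  · exact (Continuous.rexp (by continuity)).aestronglyMeasurable
  · refine Filter.Eventually.of_forall fun x => ?_
    rw [Real.norm_eq_abs, abs_of_pos (Real.exp_pos _), ← Real.exp_add]
    exact Real.exp_le_exp.2 (by nlinarith [sq_nonneg (x^2 - 1), sq_nonneg x])

lemma intC (α : ℝ) (hα : 0 < α) : Integrable (fun z : ℂ => Real.exp (-α * ‖z‖^4)) := by
  rw [← MeasurePreserving.integrable_comp_emb
    Complex.volume_preserving_equiv_real_prod.symm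
    (MeasurableEquiv.measurableEmbedding _)]
  have hprod : Integrable (fun p : ℝ × ℝ => Real.exp (-α * p.1^4) * Real.exp (-α * p.2^4)) := by
    rw [Measure.volume_eq_prod]
    exact (intR α hα).mul_prod (intR α hα)
  apply Integrable.mono' hprod
  · have hc : Continuous (fun p : ℝ × ℝ => (Complex.measurableEquivRealProd.symm p : ℂ)) := by
      simp only [Complex.measurableEquivRealProd_symm_apply, Complex.mk_eq_add_mul_I]
      continuity
    exact (Continuous.rexp (continuous_const.mul ((hc.norm).pow 4))).aestronglyMeasurable
  · refine Filter.Eventually.of_forall fun p => ?_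
    rw [Function.comp_apply, Real.norm_eq_abs, abs_of_pos (Real.exp_pos _), ← Real.exp_add]
    apply Real.exp_le_exp.2
    have h1 : ‖(Complex.measurableEquivRealProd.symm p : ℂ)‖^2 = p.1^2 + p.2^2 := by
      rw [Complex.measurableEquivRealProd_symm_apply,
        Complex.sq_norm, Complex.normSq_mk]
      ring
    have h2 : ‖(Complex.measurableEquivRealProd.symm p : ℂ)‖^4 = (p.1^2 + p.2^2)^2 := by
      rw [show (4:ℕ) = 2*2 by norm_num, pow_mul, h1]
    rw [h2]
    nlinarith [sq_nonneg (p.1 * p.2), sq_nonneg p.1, sq_nonneg p.2]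



set_option maxHeartbeats 2000000

/-- For every Hermitian `J`, the integrand of the partition function,
as a function of the real coordinates of the Hermitian matrix `Φ`, is Lebesgue
integrable, so `Z[J]` is a well-defined finite real number. -/
theorem partition_function_integrable
    (N : ℕ) (hN : 1 ≤ N) (Vc lam kap : ℝ) (hV : 0 < Vc) (hlam : 0 < lam)
    (Ev : Fin N → ℝ) (hE : ∀ i, 0 < Ev i)
    (J : Matrix (Fin N) (Fin N) ℂ) (hJ : J.IsHermitian) :
    Integrable (fun c : HCoords N =>
      Real.exp (- action N Vc lam kap Ev (hermOf c)
        + Vc * (Matrix.trace (J * hermOf c)).re)) := by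
  obtain ⟨C, α, hα, hbound⟩ := exponent_le N Vc lam kap hV hlam Ev hE J
  have hg : Integrable (fun c : HCoords N =>
      Real.exp C * ((∏ i, Real.exp (-α * (c.1 i)^4))
        * ∏ p : OffIdx N, Real.exp (-α * ‖c.2 p‖^4))) := by
    apply Integrable.const_mul
    have h1 : Integrable (fun x : Fin N → ℝ => ∏ i, Real.exp (-α * (x i)^4)) :=
      Integrable.fintype_prod (f := fun _ x => Real.exp (-α * x^4)) (fun i => intR α hα)
    have h2 : Integrable (fun y : OffIdx N → ℂ => ∏ p, Real.exp (-α * ‖y p‖^4)) :=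
      Integrable.fintype_prod (f := fun _ z => Real.exp (-α * ‖z‖^4)) (fun p => intC α hα)
    rw [show (volume : Measure (HCoords N)) = (volume).prod volume from
      Measure.volume_eq_prod _ _]
    exact h1.mul_prod h2
  apply Integrable.mono' hg (integrand_continuous N Vc lam kap Ev J).aestronglyMeasurable
  filter_upwards with c
  rw [Real.norm_eq_abs, abs_of_pos (Real.exp_pos _)]
  refine le_trans (Real.exp_le_exp.2 (hbound c)) (le_of_eq ?_)
  have h3 : Real.exp C * ((∏ i, Real.exp (-α * (c.1 i)^4))
        * ∏ p : OffIdx N, Real.exp (-α * ‖c.2 p‖^4))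
      = Real.exp (C + ((∑ i, -α * (c.1 i)^4) + ∑ p : OffIdx N, -α * ‖c.2 p‖^4)) := by
    rw [Real.exp_add, Real.exp_add, Real.exp_sum, Real.exp_sum]
  rw [h3]
  congr 1
  rw [← Finset.mul_sum, ← Finset.mul_sum]
  ring
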